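/- Let Ω₁ ⊆ ℝ^p and Ω₂ ⊆ ℝ^q (p, q ≥ 2) be bounded connected open sets, and u separately subharmonic on a neighborhood of the closure of Ω₁ × Ω₂ with u ≤ M on ∂Ω₁ × ∂Ω₂. If u(a,b) = M for some (a,b) ∈ Ω₁ × Ω₂, then u ≡ M on Ω₁ × Ω₂. -/

import Mathlib

open MeasureTheory Metric Filter Topology Set

noncomputable section

variable {E : Type*} [NormedAddCommGroup E] [InnerProductSpace ℝ E]
  [MeasurableSpace E] [BorelSpace E]

/-- The mean of an extended-real-valued function over the sphere of center `x`
and radius `r`, with respect to `d`-dimensional Hausdorff measure, defined as the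
infimum of the averages of the truncations `v ⊔ (-n)`. -/
def sphereMean (d : ℝ) (v : E → EReal) (x : E) (r : ℝ) : EReal :=
  ⨅ n : ℕ, ((⨍ y in sphere x r, ((v y) ⊔ (-(n : ℝ) : EReal)).toReal ∂ μH[d] : ℝ) : EReal)

/-- `v : E → [-∞, ∞)` is subharmonic on `U` (with sphere dimension `d = N - 1`):
upper semicontinuous on `U`, `< ∞`, not identically `-∞`, and satisfying the
sub-mean value inequality on spheres of closed balls contained in `U`. -/
def IsSubharmonicOn (d : ℝ) (v : E → EReal) (U : Set E) : Prop :=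
  UpperSemicontinuousOn v U ∧ (∀ x ∈ U, v x < ⊤) ∧ (∃ x ∈ U, v x ≠ ⊥) ∧
    ∀ x r, 0 < r → closedBall x r ⊆ U → v x ≤ sphereMean d v x r

/-- `u : E → (-∞, ∞]` is superharmonic on `U` iff `-u` is subharmonic on `U`. -/
def IsSuperharmonicOn (d : ℝ) (u : E → EReal) (U : Set E) : Prop :=
  IsSubharmonicOn d (fun x => -(u x)) U

/-- A set is polar if it is contained in the `-∞`-set of a function subharmonic
on a neighborhood of it. -/
def IsPolar (d : ℝ) (S : Set E) : Prop :=
  ∃ U : Set E, IsOpen U ∧ S ⊆ U ∧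
    ∃ v : E → EReal, IsSubharmonicOn d v U ∧ ∀ x ∈ S, v x = ⊥

/-- The fine topology: the coarsest topology making every globally defined
subharmonic function continuous. -/
def fineTopology (E : Type*) [NormedAddCommGroup E] [InnerProductSpace ℝ E]
    [MeasurableSpace E] [BorelSpace E] (d : ℝ) : TopologicalSpace E :=
  ⨅ (v : E → EReal) (_ : IsSubharmonicOn d v Set.univ),
    TopologicalSpace.induced v inferInstance

/-- A set `A` is thin at `ζ` if `ζ` is not a fine limit point of `A`. -/
def ThinAt (d : ℝ) (A : Set E) (ζ : E) : Prop :=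
  ζ ∉ @closure E (fineTopology E d) (A \ {ζ})

/-- A real-valued function is harmonic on `U` if it is continuous on `U` and
satisfies the mean value equality on spheres of closed balls contained in `U`. -/
def IsHarmonicOn (d : ℝ) (h : E → ℝ) (U : Set E) : Prop :=
  ContinuousOn h U ∧ ∀ x r, 0 < r → closedBall x r ⊆ U →
    h x = ⨍ y in sphere x r, h y ∂ μH[d]

/-- An open set is Greenian if it carries a positive superharmonic function that
is not harmonic (i.e. a potential-like function exists). -/
def IsGreenian (d : ℝ) (ω : Set E) : Prop :=
  ω.Nonempty ∧ ∃ u : E → EReal, IsSuperharmonicOn d u ω ∧ (∀ x ∈ ω, 0 < u x) ∧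
    ¬ ∃ h : E → ℝ, IsHarmonicOn d h ω ∧ ∀ x ∈ ω, u x = (h x : EReal)

/-- The Perron upper class of a boundary function `f` on `ω`. -/
def upperClass (d : ℝ) (ω : Set E) (f : E → EReal) : Set (E → EReal) :=
  {u | IsSuperharmonicOn d u ω ∧ (∃ c : ℝ, ∀ x ∈ ω, (c : EReal) ≤ u x) ∧
    ∀ ζ ∈ frontier ω, f ζ ≤ Filter.liminf u (nhdsWithin ζ ω)}

/-- The upper Perron–Wiener–Brelot solution of the Dirichlet problem on `ω`
with boundary data `f`. -/
def PWB (d : ℝ) (ω : Set E) (f : E → EReal) (x : E) : EReal :=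
  ⨅ u ∈ upperClass d ω f, u x

/-- A boundary point `ζ` of `ω` is regular for the Dirichlet problem if for every
continuous boundary data the PWB solution attains the boundary value at `ζ`. -/
def IsRegularBoundaryPoint (d : ℝ) (ω : Set E) (ζ : E) : Prop :=
  ζ ∈ frontier ω ∧ ∀ f : E → ℝ, ContinuousOn f (frontier ω) →
    Filter.Tendsto (PWB d ω (fun y => (f y : EReal))) (nhdsWithin ζ ω) (nhds ((f ζ : EReal)))

/-- `A ⊆ ∂ω` is negligible for `ω` if it has harmonic measure zero, harmonic
measure being the PWB solution for the indicator boundary data. -/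
def IsNegligible (d : ℝ) (ω A : Set E) : Prop :=
  ∀ x ∈ ω, PWB d ω (fun y => ((A.indicator (fun _ => (1 : ℝ)) y : ℝ) : EReal)) x = 0


noncomputable instance prodL2MeasurableSpace (p q : ℕ) :
    MeasurableSpace (WithLp 2 (EuclideanSpace ℝ (Fin p) × EuclideanSpace ℝ (Fin q))) := borel _

instance prodL2BorelSpace (p q : ℕ) :
    BorelSpace (WithLp 2 (EuclideanSpace ℝ (Fin p) × EuclideanSpace ℝ (Fin q))) := ⟨rfl⟩

/-- The product `ℝ^p × ℝ^q` with its Euclidean (L²) structure. -/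
abbrev ProdSpace (p q : ℕ) := WithLp 2 (EuclideanSpace ℝ (Fin p) × EuclideanSpace ℝ (Fin q))

/-- The point `(a, b)` of `ℝ^p × ℝ^q`. -/
def prodMk {p q : ℕ} (a : EuclideanSpace ℝ (Fin p)) (b : EuclideanSpace ℝ (Fin q)) :
    ProdSpace p q := (WithLp.equiv 2 _).symm (a, b)

/-- The product set `Ω₁ × Ω₂` inside `ℝ^p × ℝ^q`. -/
def prodSet {p q : ℕ} (Ω₁ : Set (EuclideanSpace ℝ (Fin p)))
    (Ω₂ : Set (EuclideanSpace ℝ (Fin q))) : Set (ProdSpace p q) :=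
  (WithLp.equiv 2 _) ⁻¹' (Ω₁ ×ˢ Ω₂)

/-- `u` is separately subharmonic on `U ⊆ ℝ^p × ℝ^q` if all its partial functions
are subharmonic on the corresponding slices. -/
def SeparatelySubharmonicOn {p q : ℕ} (u : ProdSpace p q → EReal)
    (U : Set (ProdSpace p q)) : Prop :=
  ∀ a b, prodMk a b ∈ U →
    IsSubharmonicOn ((p : ℝ) - 1) (fun x => u (prodMk x b)) {x | prodMk x b ∈ U} ∧
    IsSubharmonicOn ((q : ℝ) - 1) (fun y => u (prodMk a y)) {y | prodMk a y ∈ U}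
end


/-! ### Auxiliary lemmas -/

section Aux
open scoped NNReal ENNReal RealInnerProductSpace

/-- positivity of `μH[m]` on Euclidean balls in dimension `m`. -/
lemma ball_hm_pos (m : ℕ) (hm : 1 ≤ m) (c : EuclideanSpace ℝ (Fin m)) {ρ : ℝ} (hρ : 0 < ρ) :
    0 < μH[(m:ℝ)] (ball c ρ) := by
  haveI : Nonempty (Fin m) := ⟨⟨0, by omega⟩⟩
  set P := WithLp.equiv 2 (Fin m → ℝ) with hP
  set ρ' : ℝ := ρ / (m + 1) with hρ'
  have hρ'0 : 0 < ρ' := by positivity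
  obtain ⟨K, hK1, hK2⟩ : ∃ K : ℝ≥0, AntilipschitzWith K P ∧ (K:ℝ) ≤ m := by
    refine ⟨_, PiLp.antilipschitzWith_ofLp 2 _, ?_⟩
    push_cast [Fintype.card_fin]
    calc ((m:ℝ)) ^ ((1/(2:ℝ≥0∞)).toReal) ≤ (m:ℝ) ^ (1:ℝ) := by
          apply Real.rpow_le_rpow_of_exponent_le (by exact_mod_cast hm)
          rw [one_div, ENNReal.toReal_inv]; norm_num
      _ = (m:ℝ) := Real.rpow_one _
  have hsub : ball (P c) ρ' ⊆ P '' ball c ρ := by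
    intro f hf
    refine ⟨P.symm f, ?_, by simp⟩
    have h1 : dist (P.symm f) c ≤ (K:ℝ) * dist (P (P.symm f)) (P c) := hK1.le_mul_dist _ _
    rw [Equiv.apply_symm_apply] at h1
    have h3 : dist f (P c) < ρ' := mem_ball.mp hf
    have h4 : dist (P.symm f) c ≤ (m:ℝ) * dist f (P c) :=
      h1.trans (mul_le_mul_of_nonneg_right hK2 dist_nonneg)
    have : (m:ℝ) * dist f (P c) < ρ := by
      calc (m:ℝ) * dist f (P c) ≤ (m:ℝ) * ρ' := by
            apply mul_le_mul_of_nonneg_left h3.le (by positivity)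
        _ < ρ := by
            rw [hρ']
            rw [mul_div_assoc']
            rw [div_lt_iff₀ (by positivity)]
            nlinarith
    exact mem_ball.mpr (h4.trans_lt this)
  have hlip : μH[(m:ℝ)] (P '' ball c ρ) ≤ 1 ^ (m:ℝ) * μH[(m:ℝ)] (ball c ρ) := by
    simpa using (show μH[(m:ℝ)] (P '' ball c ρ) ≤ ((1:ℝ≥0):ℝ≥0∞) ^ (m:ℝ) * μH[(m:ℝ)] (ball c ρ) from
      (PiLp.lipschitzWith_ofLp 2 (fun _ : Fin m => ℝ)).hausdorffMeasure_image_le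
      (by positivity) (ball c ρ))
  have hvol : 0 < μH[(m:ℝ)] (ball (P c) ρ' : Set (Fin m → ℝ)) := by
    have : (μH[(m:ℝ)] : Measure (Fin m → ℝ)) = volume := by
      rw [show ((m:ℝ)) = ((Fintype.card (Fin m) : ℕ) : ℝ) by simp]
      exact MeasureTheory.hausdorffMeasure_pi_real
    rw [this]
    exact measure_ball_pos _ _ hρ'0
  calc (0:ℝ≥0∞) < μH[(m:ℝ)] (ball (P c) ρ') := hvol
    _ ≤ μH[(m:ℝ)] (P '' ball c ρ) := measure_mono hsub
    _ ≤ 1 ^ (m:ℝ) * μH[(m:ℝ)] (ball c ρ) := hlip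
    _ = μH[(m:ℝ)] (ball c ρ) := by simp


lemma sqrt_diff_le {a b c : ℝ} (hc : 0 < c) (ha : c ≤ Real.sqrt a) (hb : c ≤ Real.sqrt b) :
    |Real.sqrt a - Real.sqrt b| * (2 * c) ≤ |a - b| := by
  have ha0 : 0 < a := Real.sqrt_pos.mp (hc.trans_le ha)
  have hb0 : 0 < b := Real.sqrt_pos.mp (hc.trans_le hb)
  have hA : Real.sqrt a ^ 2 = a := Real.sq_sqrt ha0.le
  have hB : Real.sqrt b ^ 2 = b := Real.sq_sqrt hb0.le
  rcases le_total (Real.sqrt a) (Real.sqrt b) with h | h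
  · have hab : a ≤ b := by nlinarith
    rw [abs_of_nonpos (by linarith), abs_of_nonpos (by linarith)]
    nlinarith
  · have hab : b ≤ a := by nlinarith
    rw [abs_of_nonneg (by linarith), abs_of_nonneg (by linarith)]
    nlinarith

lemma sphere_hm_lt_top (m : ℕ) (hm : 1 ≤ m) (x : EuclideanSpace ℝ (Fin (m+1))) {r : ℝ}
    (hr : 0 < r) : μH[(m:ℝ)] (sphere x r) < ⊤ := by
  haveI : Nonempty (Fin m) := ⟨⟨0, by omega⟩⟩
  revert x
  set n : ℕ := m + 1 with hn
  intro x
  have hd : (0:ℝ) ≤ (m:ℝ) := Nat.cast_nonneg m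
  have hn0 : (0:ℝ) < n := by positivity
  have hsn : 0 < Real.sqrt n := Real.sqrt_pos.mpr hn0
  have hsn2 : Real.sqrt n * Real.sqrt n = n := Real.mul_self_sqrt hn0.le
  have h1n : (1:ℝ) ≤ (n:ℝ) := by exact_mod_cast Nat.succ_le_succ (Nat.zero_le m)
  set B : Set (Fin m → ℝ) := {η | ∑ j, η j ^ 2 ≤ r ^ 2 * (1 - 1/(n:ℝ))} with hB
  set g : (Fin m → ℝ) → ℝ := fun η => Real.sqrt (r^2 - ∑ j, η j ^ 2) with hg
  have hsub : ∀ η ∈ B, r^2/(n:ℝ) ≤ r^2 - ∑ j, η j ^ 2 := by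
    intro η hη
    have h3 : ∑ j, η j ^ 2 ≤ r ^ 2 * (1 - 1/(n:ℝ)) := hη
    have h2 : r ^ 2 * (1 - 1/(n:ℝ)) = r^2 - r^2/n := by ring
    rw [h2] at h3; linarith
  have hgB : ∀ η ∈ B, r / Real.sqrt n ≤ g η := by
    intro η hη
    calc r / Real.sqrt n = Real.sqrt (r^2) / Real.sqrt n := by rw [Real.sqrt_sq hr.le]
      _ = Real.sqrt (r^2/n) := (Real.sqrt_div (by positivity) _).symm
      _ ≤ g η := Real.sqrt_le_sqrt (hsub η hη)
  have hcoord : ∀ η ∈ B, ∀ j, |η j| ≤ r := by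
    intro η hη j
    have h1 : η j ^ 2 ≤ r ^ 2 := by
      have h2 := hsub η hη
      have h3 : η j ^ 2 ≤ ∑ j', η j' ^ 2 :=
        Finset.single_le_sum (f := fun j' => η j' ^ 2) (fun _ _ => sq_nonneg _)
          (Finset.mem_univ j)
      have h4 : (0:ℝ) ≤ r^2/n := by positivity
      linarith
    calc |η j| = Real.sqrt (η j ^ 2) := (Real.sqrt_sq_eq_abs _).symm
      _ ≤ Real.sqrt (r ^ 2) := Real.sqrt_le_sqrt h1
      _ = r := Real.sqrt_sq hr.le
  -- Lipschitz bound for g on B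
  have hgl : ∀ η ∈ B, ∀ η' ∈ B, |g η - g η'| ≤ (n:ℝ)^2 * dist η η' := by
    intro η hη η' hη'
    have hc0 : 0 < r / Real.sqrt n := by positivity
    have key := sqrt_diff_le hc0 (hgB η hη) (hgB η' hη')
    have habs : |(r^2 - ∑ j, η j ^ 2) - (r^2 - ∑ j, η' j ^ 2)| ≤ (m:ℝ) * (2*r * dist η η') := by
      have h1 : (r^2 - ∑ j, η j ^ 2) - (r^2 - ∑ j, η' j ^ 2) = ∑ j, (η' j ^2 - η j ^2) := by
        rw [Finset.sum_sub_distrib]; ring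
      rw [h1]
      calc |∑ j, (η' j ^2 - η j ^2)| ≤ ∑ j, |η' j ^2 - η j ^2| :=
            Finset.abs_sum_le_sum_abs _ _
        _ ≤ ∑ _j : Fin m, (2*r * dist η η') := by
            apply Finset.sum_le_sum
            intro j _
            have h2 : η' j ^2 - η j ^2 = (η' j - η j) * (η' j + η j) := by ring
            rw [h2, abs_mul]
            have h3 : |η' j - η j| ≤ dist η η' := by
              rw [dist_comm, ← Real.dist_eq]; exact dist_le_pi_dist η' η j
            have h4 : |η' j + η j| ≤ 2 * r := by
              calc |η' j + η j| ≤ |η' j| + |η j| := abs_add_le _ _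
                _ ≤ 2 * r := by
                    have := hcoord η hη j; have := hcoord η' hη' j; linarith
            calc |η' j - η j| * |η' j + η j| ≤ dist η η' * (2*r) :=
                  mul_le_mul h3 h4 (abs_nonneg _) dist_nonneg
              _ = 2*r * dist η η' := by ring
        _ = (m:ℝ) * (2*r * dist η η') := by
            rw [Finset.sum_const, Finset.card_univ, Fintype.card_fin, nsmul_eq_mul]
    -- combine
    have hD : (0:ℝ) ≤ dist η η' := dist_nonneg
    have hmn : (m:ℝ) ≤ n := by exact_mod_cast Nat.le_succ m
    have hsnn : Real.sqrt n ≤ n := by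
      calc Real.sqrt n ≤ Real.sqrt ((n:ℝ)^2) := Real.sqrt_le_sqrt (by nlinarith [h1n])
        _ = n := Real.sqrt_sq hn0.le
    have e1 : |g η - g η'| ≤ ((m:ℝ) * (2*r* dist η η')) / (2*(r/Real.sqrt n)) := by
      rw [le_div_iff₀ (by positivity)]
      exact key.trans habs
    have e2 : ((m:ℝ) * (2*r* dist η η')) / (2*(r/Real.sqrt n)) =
        (m:ℝ) * Real.sqrt n * dist η η' := by
      field_simp
    rw [e2] at e1
    refine e1.trans (mul_le_mul_of_nonneg_right ?_ hD)
    calc (m:ℝ) * Real.sqrt n ≤ (n:ℝ) * (n:ℝ) := by nlinarith [Real.sqrt_nonneg (n:ℝ)]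
      _ = (n:ℝ)^2 := by ring
  -- the graph maps
  set F : Fin n → ℝ → (Fin m → ℝ) → EuclideanSpace ℝ (Fin n) := fun i σ η =>
    x + (WithLp.equiv 2 (Fin n → ℝ)).symm (i.insertNth (σ * g η) η) with hF
  have hFlip : ∀ (i : Fin n) (σ : ℝ), σ = 1 ∨ σ = -1 →
      LipschitzOnWith ((n:ℝ≥0) * (n:ℝ≥0)^2) (F i σ) B := by
    intro i σ hσ
    have habs : |σ| = 1 := by rcases hσ with rfl | rfl <;> norm_num
    have h1 : LipschitzOnWith ((n:ℝ≥0)^2)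
        (fun η : Fin m → ℝ => (i.insertNth (σ * g η) η : Fin n → ℝ)) B := by
      rw [lipschitzOnWith_iff_dist_le_mul]
      intro η hη η' hη'
      rw [dist_pi_le_iff (by positivity)]
      intro j
      refine Fin.succAboveCases i ?_ (fun k => ?_) j
      · simp only [Fin.insertNth_apply_same]
        rw [Real.dist_eq, ← mul_sub, abs_mul, habs, one_mul]
        have := hgl η hη η' hη'
        calc |g η - g η'| ≤ (n:ℝ)^2 * dist η η' := this
          _ = ((n:ℝ≥0)^2 : ℝ≥0) * dist η η' := by push_cast; ring
      · simp only [Fin.insertNth_apply_succAbove]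
        calc dist (η k) (η' k) ≤ dist η η' := dist_le_pi_dist η η' k
          _ ≤ ((n:ℝ≥0)^2 : ℝ≥0) * dist η η' := by
              apply le_mul_of_one_le_left dist_nonneg
              have : (1:ℝ) ≤ (n:ℝ) := by exact_mod_cast Nat.one_le_iff_ne_zero.mpr (by omega)
              push_cast; nlinarith
    have h2 : LipschitzWith (n:ℝ≥0) ((WithLp.equiv 2 (Fin n → ℝ)).symm) := by
      apply LipschitzWith.weaken (PiLp.lipschitzWith_toLp 2
        (fun _ : Fin n => ℝ))
      rw [Fintype.card_fin]
      calc ((n:ℝ≥0) ^ ((1/(2:ℝ≥0∞)).toReal) : ℝ≥0) ≤ (n:ℝ≥0) ^ (1:ℝ) := by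
            apply NNReal.rpow_le_rpow_of_exponent_le (by exact_mod_cast Nat.one_le_iff_ne_zero.mpr (by omega))
            rw [one_div, ENNReal.toReal_inv]; norm_num
        _ = (n:ℝ≥0) := NNReal.rpow_one _
    have h3 : LipschitzWith 1 (fun w : EuclideanSpace ℝ (Fin n) => x + w) :=
      LipschitzWith.of_dist_le_mul (fun w w' => by simp [dist_add_left])
    have := h3.comp_lipschitzOnWith (h2.comp_lipschitzOnWith h1)
    simpa [hF, one_mul, Function.comp_def] using this
  have hFfin : ∀ (i : Fin n) (σ : ℝ), σ = 1 ∨ σ = -1 → μH[(m:ℝ)] (F i σ '' B) < ⊤ := by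
    intro i σ hσ
    have h1 := (hFlip i σ hσ).hausdorffMeasure_image_le hd
    have h2 : μH[(m:ℝ)] B < ⊤ := by
      have hrw : (μH[(m:ℝ)] : Measure (Fin m → ℝ)) = volume := by
        rw [show ((m:ℝ)) = ((Fintype.card (Fin m) : ℕ) : ℝ) by simp]
        exact MeasureTheory.hausdorffMeasure_pi_real
      rw [hrw]
      refine lt_of_le_of_lt (measure_mono ?_) (measure_closedBall_lt_top (x := 0) (r := r))
      intro η hη
      rw [mem_closedBall, dist_pi_le_iff hr.le]
      intro j
      simpa [Real.dist_eq] using hcoord η hη j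
    refine lt_of_le_of_lt h1 (ENNReal.mul_lt_top ?_ h2)
    exact ENNReal.rpow_lt_top_of_nonneg hd ENNReal.coe_ne_top
  -- covering
  have hcover : sphere x r ⊆ ⋃ i : Fin n, (F i 1 '' B ∪ F i (-1) '' B) := by
    intro w hw
    have hd1 : dist w x = r := mem_sphere.mp hw
    rw [EuclideanSpace.dist_eq] at hd1
    simp only [Real.dist_eq, sq_abs] at hd1
    have hsum : ∑ j, (w j - x j)^2 = r^2 := by
      have h0 : (0:ℝ) ≤ ∑ j, (w j - x j)^2 := Finset.sum_nonneg fun _ _ => sq_nonneg _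
      rw [← hd1, Real.sq_sqrt h0]
    have hex : ∃ i, r^2/(n:ℝ) ≤ (w i - x i)^2 := by
      by_contra! hcon
      have h1 : ∑ j, (w j - x j)^2 < ∑ _j : Fin n, r^2/(n:ℝ) :=
        Finset.sum_lt_sum_of_nonempty Finset.univ_nonempty (fun j _ => hcon j)
      rw [Finset.sum_const, Finset.card_univ, Fintype.card_fin, nsmul_eq_mul] at h1
      rw [hsum] at h1
      have : (n:ℝ) * (r^2/n) = r^2 := by field_simp
      linarith [this ▸ h1]
    obtain ⟨i, hi⟩ := hex
    set c := w i - x i with hc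
    have hc0 : c ≠ 0 := by
      intro h
      rw [h] at hi
      have h2 : (0:ℝ) < r^2/(n:ℝ) := by positivity
      nlinarith [hi]
    set η : Fin m → ℝ := fun j => w (i.succAbove j) - x (i.succAbove j) with hη
    have hQ : ∑ j, η j ^ 2 = r^2 - c^2 := by
      have h1 := Fin.sum_univ_succAbove (fun j => (w j - x j)^2) i
      rw [hsum] at h1
      simp only [hη, hc]
      linarith [h1]
    clear_value η
    have hηB : η ∈ B := by
      simp only [hB, mem_setOf_eq, hQ]
      have : r^2 * (1 - 1/(n:ℝ)) = r^2 - r^2/n := by ring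
      rw [this]; linarith
    have hgη : g η = |c| := by
      rw [hg]
      simp only [hQ]
      rw [show r^2 - (r^2 - c^2) = c^2 by ring, Real.sqrt_sq_eq_abs]
    have hkey : ∀ σ : ℝ, σ * |c| = c → F i σ η = w := by
      intro σ hσc
      simp only [hF]
      have h2 : (WithLp.equiv 2 (Fin n → ℝ)).symm (i.insertNth (σ * g η) η) = w - x := by
        rw [Equiv.symm_apply_eq]
        funext j
        refine Fin.succAboveCases i ?_ (fun k => ?_) j
        · rw [Fin.insertNth_apply_same, hgη, hσc]
          simp [WithLp.equiv, PiLp.sub_apply, hc]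
        · rw [Fin.insertNth_apply_succAbove]
          simp [WithLp.equiv, PiLp.sub_apply, hη]
      rw [h2]
      abel
    rw [mem_iUnion]
    by_cases hcpos : 0 < c
    · exact ⟨i, Or.inl ⟨η, hηB, hkey 1 (by rw [one_mul, abs_of_pos hcpos])⟩⟩
    · have hcneg : c < 0 := lt_of_le_of_ne (not_lt.mp hcpos) hc0
      exact ⟨i, Or.inr ⟨η, hηB, hkey (-1) (by rw [abs_of_neg hcneg]; ring)⟩⟩
  calc μH[(m:ℝ)] (sphere x r) ≤ μH[(m:ℝ)] (⋃ i : Fin n, (F i 1 '' B ∪ F i (-1) '' B)) :=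
        measure_mono hcover
    _ ≤ ∑ i : Fin n, μH[(m:ℝ)] (F i 1 '' B ∪ F i (-1) '' B) :=
        measure_iUnion_fintype_le _ _
    _ < ⊤ := by
        apply ENNReal.sum_lt_top.mpr
        intro i _
        exact lt_of_le_of_lt (measure_union_le _ _)
          (ENNReal.add_lt_top.mpr ⟨hFfin i 1 (Or.inl rfl), hFfin i (-1) (Or.inr rfl)⟩)


lemma cap_arith {r δ δ' s a N : ℝ} (hr : 0 < r) (hδ : 0 < δ) (hδ'2 : δ' ≤ δ/2)
    (hδ'r : δ' ≤ r) (hs0 : 0 ≤ s) (hsδ : s < δ') (ha0 : 0 ≤ a) (ha2 : a^2 = r^2 - s^2)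
    (hN0 : 0 ≤ N) (hN2 : N^2 = (a-r)^2 + s^2) : N < δ := by
  have hsr : s ≤ r := le_trans hsδ.le hδ'r
  have h4 : r - s ≤ a := by
    have h5 : (r - s)^2 ≤ a^2 := by nlinarith
    nlinarith
  have h5 : a ≤ r := by nlinarith
  nlinarith

lemma cap_arith2 {r δ' s : ℝ} (hr : 0 < r) (hδ'r : δ' ≤ r) (hs0 : 0 ≤ s) (hsδ : s < δ') :
    0 ≤ r^2 - s^2 := by nlinarith


set_option maxHeartbeats 2000000 in
lemma cap_hm_pos (m : ℕ) (hm : 1 ≤ m) (x z : EuclideanSpace ℝ (Fin (m+1))) {r δ : ℝ}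
    (hr : 0 < r) (hδ : 0 < δ) (hz : z ∈ sphere x r) :
    0 < μH[(m:ℝ)] (sphere x r ∩ ball z δ) := by
  have hd : (0:ℝ) ≤ (m:ℝ) := Nat.cast_nonneg m
  have hzx : ‖z - x‖ = r := by rw [← dist_eq_norm]; exact mem_sphere.mp hz
  set e₀ : EuclideanSpace ℝ (Fin (m+1)) := r⁻¹ • (z - x) with he₀
  have hne₀ : ‖e₀‖ = 1 := by
    rw [he₀, norm_smul, hzx, norm_inv, Real.norm_eq_abs, abs_of_pos hr, inv_mul_cancel₀ hr.ne']
  have he₀0 : e₀ ≠ 0 := by intro h; rw [h, norm_zero] at hne₀; norm_num at hne₀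
  have hze : z = x + r • e₀ := by
    rw [he₀, smul_smul, mul_inv_cancel₀ hr.ne', one_smul]
    abel
  haveI : Fact (Module.finrank ℝ (EuclideanSpace ℝ (Fin (m+1))) = m + 1) :=
    ⟨finrank_euclideanSpace_fin⟩
  set K : Submodule ℝ (EuclideanSpace ℝ (Fin (m+1))) := (ℝ ∙ e₀)ᗮ with hK
  have he₀K : e₀ ∈ Kᗮ := Submodule.le_orthogonal_orthogonal _ (Submodule.mem_span_singleton_self e₀)
  set Bas := OrthonormalBasis.fromOrthogonalSpanSingleton (𝕜 := ℝ) m he₀0 with hBas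
  set P := K.orthogonalProjectionOnto with hP
  set T : EuclideanSpace ℝ (Fin (m+1)) → EuclideanSpace ℝ (Fin m) := fun w => Bas.repr (P w) with hT
  have hTlip : LipschitzWith 1 T := by
    apply LipschitzWith.of_dist_le_mul
    intro w w'
    rw [NNReal.coe_one, one_mul, hT]
    simp only []
    rw [Bas.repr.dist_map]
    rw [dist_eq_norm, dist_eq_norm, ← map_sub]
    calc ‖P (w - w')‖ ≤ ‖(P : EuclideanSpace ℝ (Fin (m+1)) →L[ℝ] K)‖ * ‖w - w'‖ :=
          (P : EuclideanSpace ℝ (Fin (m+1)) →L[ℝ] K).le_opNorm _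
      _ ≤ 1 * ‖w - w'‖ := by
          apply mul_le_mul_of_nonneg_right (K.orthogonalProjectionOnto_norm_le) (norm_nonneg _)
      _ = ‖w - w'‖ := one_mul _
  set δ' : ℝ := min (δ/2) r with hδ'
  have hδ'0 : 0 < δ' := lt_min (by positivity) hr
  have hδ'r : δ' ≤ r := min_le_right _ _
  have hPe₀ : P e₀ = 0 := by
    rw [hP, Submodule.orthogonalProjectionOnto_eq_zero_iff]
    exact he₀K
  have hTz : T z = Bas.repr (P x) := by
    rw [hT]; simp only []
    rw [hze]; rw [map_add, LinearMapClass.map_smul, hPe₀, smul_zero, add_zero]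
  have hsub : ball (T z) δ' ⊆ T '' (sphere x r ∩ ball z δ) := by
    intro ξ hξ
    set k : K := Bas.repr.symm (ξ - T z) with hk
    set v : EuclideanSpace ℝ (Fin (m+1)) := (k : EuclideanSpace ℝ (Fin (m+1))) with hv
    have hvK : v ∈ K := k.2
    have hvδ : ‖v‖ < δ' := by
      rw [hv, hk, Submodule.norm_coe, LinearIsometryEquiv.norm_map, ← dist_eq_norm]
      exact mem_ball.mp hξ
    have hinner : @inner ℝ _ _ e₀ v = 0 :=
      (Submodule.mem_orthogonal _ v).mp hvK e₀ (Submodule.mem_span_singleton_self e₀)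
    obtain ⟨s, hs, hs0, hsδ⟩ : ∃ s : ℝ, ‖v‖ = s ∧ 0 ≤ s ∧ s < δ' :=
      ⟨‖v‖, rfl, norm_nonneg v, hvδ⟩
    have hδ'2 : δ' ≤ δ/2 := min_le_left _ _
    obtain ⟨a, ha0, ha2⟩ : ∃ a : ℝ, 0 ≤ a ∧ a^2 = r^2 - s^2 :=
      ⟨Real.sqrt (r^2 - s^2), Real.sqrt_nonneg _,
        Real.sq_sqrt (cap_arith2 hr hδ'r hs0 hsδ)⟩
    set w : EuclideanSpace ℝ (Fin (m+1)) := x + a • e₀ + v with hw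
    have hnsq : ∀ t : ℝ, ‖t • e₀ + v‖^2 = t^2 + s^2 := by
      intro t
      rw [norm_add_sq_real, real_inner_smul_left, hinner, mul_zero, norm_smul, hne₀,
        Real.norm_eq_abs, hs]
      ring_nf
      rw [sq_abs]
      ring
    have hwsphere : w ∈ sphere x r := by
      rw [mem_sphere, dist_eq_norm]
      have h1 : w - x = a • e₀ + v := by rw [hw]; abel
      rw [h1]
      have h2 : ‖a • e₀ + v‖^2 = r^2 := by rw [hnsq a, ha2]; ring
      calc ‖a • e₀ + v‖ = Real.sqrt (‖a • e₀ + v‖^2) := (Real.sqrt_sq (norm_nonneg _)).symm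
        _ = Real.sqrt (r^2) := by rw [h2]
        _ = r := Real.sqrt_sq hr.le
    have hwball : w ∈ ball z δ := by
      rw [mem_ball, dist_eq_norm]
      have h1 : w - z = (a - r) • e₀ + v := by
        rw [hw, hze, sub_smul]
        abel
      rw [h1]
      obtain ⟨N, hN, hN0⟩ : ∃ N, ‖(a - r) • e₀ + v‖ = N ∧ 0 ≤ N := ⟨_, rfl, norm_nonneg _⟩
      have h2 : N^2 = (a-r)^2 + s^2 := by rw [← hN, hnsq]
      rw [hN]
      exact cap_arith hr hδ hδ'2 hδ'r hs0 hsδ ha0 ha2 hN0 h2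
    refine ⟨w, ⟨hwsphere, hwball⟩, ?_⟩
    rw [hT]; simp only []
    rw [hw]; simp only [map_add, _root_.map_smul, hPe₀, smul_zero, add_zero]
    have hPv : P v = k := by
      rw [hP, hv]
      exact Submodule.orthogonalProjectionOnto_mem_subspace_eq_self k
    rw [hPv, hk, LinearIsometryEquiv.apply_symm_apply, hTz]
    abel
  have hpos := ball_hm_pos m hm (T z) hδ'0
  have himg : μH[(m:ℝ)] (T '' (sphere x r ∩ ball z δ)) ≤
      1 ^ (m:ℝ) * μH[(m:ℝ)] (sphere x r ∩ ball z δ) := by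
    simpa using hTlip.hausdorffMeasure_image_le hd _
  calc (0:ℝ≥0∞) < μH[(m:ℝ)] (ball (T z) δ') := hpos
    _ ≤ μH[(m:ℝ)] (T '' (sphere x r ∩ ball z δ)) := measure_mono hsub
    _ ≤ 1 ^ (m:ℝ) * μH[(m:ℝ)] (sphere x r ∩ ball z δ) := himg
    _ = μH[(m:ℝ)] (sphere x r ∩ ball z δ) := by simp


end Aux


section Aux2
open scoped NNReal ENNReal Classical

lemma isOpen_usc_lt {X : Type*} [TopologicalSpace X] {W : Set X} (hW : IsOpen W) {v : X → EReal}
    (hv : UpperSemicontinuousOn v W) (c : EReal) : IsOpen {w ∈ W | v w < c} := by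
  rw [isOpen_iff_mem_nhds]
  rintro w ⟨hwW, hwc⟩
  have h1 : ∀ᶠ y in nhdsWithin w W, v y < c := hv w hwW c hwc
  rw [nhdsWithin_eq_nhds.mpr (hW.mem_nhds hwW)] at h1
  exact Filter.mem_of_superset (Filter.inter_mem (hW.mem_nhds hwW) h1)
    (fun y hy => ⟨hy.1, hy.2⟩)

lemma measurable_usc_ext {X : Type*} [TopologicalSpace X] [MeasurableSpace X]
    [OpensMeasurableSpace X] {W : Set X} (hW : IsOpen W) {v : X → EReal}
    (hv : UpperSemicontinuousOn v W) :
    Measurable (fun w => if w ∈ W then v w else (⊥ : EReal)) := by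
  apply measurable_of_Iio
  intro c
  by_cases hc : (⊥ : EReal) < c
  · have h : (fun w => if w ∈ W then v w else (⊥:EReal)) ⁻¹' Set.Iio c
        = {w ∈ W | v w < c} ∪ Wᶜ := by
      ext w; by_cases hw : w ∈ W <;> simp [hw, hc]
    rw [h]
    exact ((isOpen_usc_lt hW hv c).measurableSet).union hW.isClosed_compl.measurableSet
  · have hcbot : c = ⊥ := by
      rcases eq_or_lt_of_le (bot_le : (⊥:EReal) ≤ c) with h | h
      · exact h.symm
      · exact absurd h hc
    have h : (fun w => if w ∈ W then v w else (⊥:EReal)) ⁻¹' Set.Iio c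
        = {w ∈ W | v w < c} := by
      ext w; by_cases hw : w ∈ W <;> simp [hw, hcbot]
    rw [h]
    exact (isOpen_usc_lt hW hv c).measurableSet

end Aux2

section Aux3
open scoped NNReal ENNReal Classical

lemma eq_on_ball (m : ℕ) (hm : 1 ≤ m) {W : Set (EuclideanSpace ℝ (Fin (m+1)))}
    (hW : IsOpen W) {v : EuclideanSpace ℝ (Fin (m+1)) → EReal}
    (husc : UpperSemicontinuousOn v W)
    (hsm : ∀ x r, 0 < r → closedBall x r ⊆ W → v x ≤ sphereMean (m:ℝ) v x r)
    {M : ℝ} (hle : ∀ w ∈ W, v w ≤ (M:EReal))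
    {y : EuclideanSpace ℝ (Fin (m+1))} {r : ℝ} (hr : 0 < r) (hball : closedBall y r ⊆ W)
    (hy : v y = (M:EReal)) : ∀ z ∈ ball y r, v z = (M:EReal) := by
  intro z hz
  by_contra hne
  have hzW : z ∈ W := hball (ball_subset_closedBall hz)
  have hlt : v z < (M:EReal) := lt_of_le_of_ne (hle z hzW) hne
  obtain ⟨t, hvt, htM⟩ := EReal.exists_between_coe_real hlt
  have htM' : t < M := EReal.coe_lt_coe_iff.mp htM
  by_cases hzy : z = y
  · rw [hzy, hy] at hlt; exact lt_irrefl _ hlt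
  have hs0 : 0 < dist z y := dist_pos.mpr hzy
  have hsr : dist z y < r := mem_ball.mp hz
  have h1 : ∀ᶠ w in nhds z, v w < (t:EReal) := by
    have h2 := husc z hzW (t:EReal) hvt
    rwa [nhdsWithin_eq_nhds.mpr (hW.mem_nhds hzW)] at h2
  obtain ⟨δ, hδ0, hδ⟩ := Metric.eventually_nhds_iff.mp h1
  obtain ⟨n₀, hn₀⟩ : ∃ n₀ : ℕ, -(n₀:ℝ) ≤ min t M := by
    obtain ⟨n₀, h⟩ := exists_nat_ge (-(min t M)); exact ⟨n₀, by linarith⟩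
  have hn₀t : -(n₀:ℝ) ≤ t := le_trans hn₀ (min_le_left _ _)
  have hn₀M : -(n₀:ℝ) ≤ M := le_trans hn₀ (min_le_right _ _)
  set μ : Measure (EuclideanSpace ℝ (Fin (m+1))) := μH[(m:ℝ)] with hμ
  set S₀ := sphere y (dist z y) with hS₀def
  have hS₀W : S₀ ⊆ W := fun w hw =>
    hball (mem_closedBall.mpr ((mem_sphere.mp hw).le.trans hsr.le))
  have hmean := hsm y (dist z y) hs0
    ((closedBall_subset_closedBall hsr.le).trans hball)
  rw [hy] at hmean
  set g : EuclideanSpace ℝ (Fin (m+1)) → ℝ :=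
    fun w => ((v w) ⊔ (-(n₀ : ℝ) : EReal)).toReal with hg
  have key : (M : EReal) ≤
      ((⨍ w in S₀, g w ∂ μ : ℝ) : EReal) := le_trans hmean (iInf_le _ n₀)
  have keyR : M ≤ ⨍ w in S₀, g w ∂ μ := EReal.coe_le_coe_iff.mp key
  -- bounds for g
  have hbounds : ∀ w ∈ W, (-(n₀:ℝ) ≤ g w ∧ g w ≤ M) ∧ (v w < (t:EReal) → g w ≤ t) := by
    intro w hwW
    have hvw : v w ≤ (M:EReal) := hle w hwW
    have hbne : v w ⊔ (-(n₀ : ℝ) : EReal) ≠ ⊥ :=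
      ne_bot_of_le_ne_bot (EReal.coe_ne_bot _) le_sup_right
    have hble : v w ⊔ (-(n₀ : ℝ) : EReal) ≤ (M : EReal) :=
      sup_le hvw (EReal.coe_le_coe_iff.mpr hn₀M)
    have hbnt : v w ⊔ (-(n₀ : ℝ) : EReal) ≠ ⊤ :=
      ne_top_of_le_ne_top (EReal.coe_ne_top _) hble
    refine ⟨⟨?_, ?_⟩, ?_⟩
    · have h3 : ((-(n₀:ℝ) : ℝ) : EReal) ≤ v w ⊔ (-(n₀ : ℝ) : EReal) := le_sup_right
      have := EReal.toReal_le_toReal h3 (EReal.coe_ne_bot _) hbnt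
      rwa [EReal.toReal_coe] at this
    · have := EReal.toReal_le_toReal hble hbne (EReal.coe_ne_top _)
      rwa [EReal.toReal_coe] at this
    · intro hvt2
      have h3 : v w ⊔ (-(n₀ : ℝ) : EReal) ≤ (t : EReal) :=
        sup_le hvt2.le (EReal.coe_le_coe_iff.mpr hn₀t)
      have := EReal.toReal_le_toReal h3 hbne (EReal.coe_ne_top _)
      rwa [EReal.toReal_coe] at this
  -- measurability / integrability
  have hSmeas : MeasurableSet S₀ := (isClosed_sphere).measurableSet
  have hfin : μ S₀ < ⊤ := sphere_hm_lt_top m hm y hs0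
  have hpos : 0 < μ S₀ := by
    have := cap_hm_pos m hm y z hs0 hδ0 (mem_sphere.mpr rfl)
    exact this.trans_le (measure_mono Set.inter_subset_left)
  set C := S₀ ∩ ball z δ with hC
  have hCmeas : MeasurableSet C := hSmeas.inter measurableSet_ball
  have hCpos : 0 < μ C := cap_hm_pos m hm y z hs0 hδ0 (mem_sphere.mpr rfl)
  have hCS : C ⊆ S₀ := Set.inter_subset_left
  haveI : IsFiniteMeasure (μ.restrict S₀) :=
    ⟨by rw [Measure.restrict_apply_univ]; exact hfin⟩
  have hGmeas : Measurable (fun w =>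
      ((if w ∈ W then v w else (⊥:EReal)) ⊔ (-(n₀ : ℝ) : EReal)).toReal) := by
    apply measurable_ereal_toReal.comp
    exact ((measurable_usc_ext hW husc).max measurable_const)
  have haem : AEStronglyMeasurable g (μ.restrict S₀) := by
    refine (hGmeas.aestronglyMeasurable).congr ?_
    filter_upwards [ae_restrict_mem hSmeas] with w hw
    simp only [hg]
    rw [if_pos (hS₀W hw)]
  have hint : IntegrableOn g S₀ μ := by
    refine Integrable.mono' (integrable_const ((n₀:ℝ) + |M|)) haem ?_
    filter_upwards [ae_restrict_mem hSmeas] with w hw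
    obtain ⟨⟨hlo, hhi⟩, _⟩ := hbounds w (hS₀W hw)
    rw [Real.norm_eq_abs, abs_le]
    constructor
    · have := abs_nonneg M; linarith
    · have := le_abs_self M; have := Nat.cast_nonneg (α := ℝ) n₀; linarith
  -- integral estimates
  haveI : IsFiniteMeasure (μ.restrict C) :=
    ⟨by rw [Measure.restrict_apply_univ]; exact (measure_mono hCS).trans_lt hfin⟩
  haveI : IsFiniteMeasure (μ.restrict (S₀ \ C)) :=
    ⟨by rw [Measure.restrict_apply_univ]
        exact (measure_mono Set.diff_subset).trans_lt hfin⟩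
  set m' := (μ S₀).toReal with hm'
  set c' := (μ C).toReal with hc'
  have hm'0 : 0 < m' := ENNReal.toReal_pos hpos.ne' hfin.ne
  have hc'0 : 0 < c' := ENNReal.toReal_pos hCpos.ne' ((measure_mono hCS).trans_lt hfin).ne
  have hc'm : c' ≤ m' :=
    (ENNReal.toReal_le_toReal ((measure_mono hCS).trans_lt hfin).ne hfin.ne).mpr
      (measure_mono hCS)
  have hIsplit : ∫ w in S₀, g w ∂μ = (∫ w in C, g w ∂μ) + ∫ w in S₀ \ C, g w ∂μ := by
    have h2 := MeasureTheory.setIntegral_union (disjoint_sdiff_self_right (x := C) (y := S₀))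
      (hSmeas.diff hCmeas) (hint.mono_set hCS) (hint.mono_set Set.diff_subset)
    rw [Set.union_diff_cancel hCS] at h2
    exact h2
  have hIC : ∫ w in C, g w ∂μ ≤ c' * t := by
    have h1 : ∫ w in C, g w ∂μ ≤ ∫ _ in C, t ∂μ := by
      apply setIntegral_mono_on (hint.mono_set hCS) (integrable_const t) hCmeas
      intro w hw
      exact (hbounds w (hS₀W hw.1)).2 (hδ (mem_ball.mp hw.2))
    rwa [setIntegral_const, smul_eq_mul] at h1
  have hdiffR : (μ (S₀ \ C)).toReal = m' - c' := by
    have hdiff : μ (S₀ \ C) = μ S₀ - μ C :=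
      measure_diff hCS hCmeas.nullMeasurableSet ((measure_mono hCS).trans_lt hfin).ne
    rw [hdiff, ENNReal.toReal_sub_of_le (measure_mono hCS) hfin.ne]
  have hID : ∫ w in S₀ \ C, g w ∂μ ≤ (m' - c') * M := by
    have h1 : ∫ w in S₀ \ C, g w ∂μ ≤ ∫ _ in S₀ \ C, M ∂μ := by
      apply setIntegral_mono_on (hint.mono_set Set.diff_subset) (integrable_const M)
        (hSmeas.diff hCmeas)
      intro w hw
      exact ((hbounds w (hS₀W hw.1)).1).2
    rwa [setIntegral_const, smul_eq_mul, measureReal_def, hdiffR] at h1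
  have hA : ⨍ w in S₀, g w ∂μ = m'⁻¹ * ∫ w in S₀, g w ∂μ := by
    rw [setAverage_eq, smul_eq_mul, measureReal_def]
  have hAle : ⨍ w in S₀, g w ∂μ ≤ m'⁻¹ * (c' * t + (m' - c') * M) := by
    rw [hA]
    apply mul_le_mul_of_nonneg_left _ (by positivity)
    rw [hIsplit]
    exact add_le_add hIC hID
  have hlt2 : m'⁻¹ * (c' * t + (m' - c') * M) < M := by
    rw [← div_eq_inv_mul, div_lt_iff₀ hm'0]
    nlinarith
  linarith

lemma usc_exists_max {X : Type*} [TopologicalSpace X] [T2Space X] {K W : Set X}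
    (hK : IsCompact K) (hne : K.Nonempty) (hW : IsOpen W) (hKW : K ⊆ W) {v : X → EReal}
    (husc : UpperSemicontinuousOn v W) : ∃ x₀ ∈ K, ∀ w ∈ K, v w ≤ v x₀ := by
  set M := sSup (v '' K) with hM
  have hle : ∀ w ∈ K, v w ≤ M := fun w hw => le_sSup ⟨w, hw, rfl⟩
  by_cases hbot : M = ⊥
  · obtain ⟨w₀, hw₀⟩ := hne
    exact ⟨w₀, hw₀, fun w hw => (hle w hw).trans (hbot ▸ bot_le)⟩
  haveI hPne : Nonempty {t : EReal // t < M} := ⟨⟨⊥, bot_lt_iff_ne_bot.mpr hbot⟩⟩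
  set C : {t : EReal // t < M} → Set X := fun t => K ∩ {w ∈ W | v w < t.1}ᶜ with hC
  have hCclosed : ∀ t, IsClosed (C t) :=
    fun t => hK.isClosed.inter (isOpen_usc_lt hW husc t.1).isClosed_compl
  have hCco : ∀ t, IsCompact (C t) := fun t =>
    hK.of_isClosed_subset (hCclosed t) Set.inter_subset_left
  have hCmem : ∀ (t : {t : EReal // t < M}) (w : X), w ∈ K → t.1 ≤ v w → w ∈ C t := by
    rintro t w hwK hvw
    exact ⟨hwK, fun hmem => absurd hvw (not_le.mpr hmem.2)⟩
  have hCne : ∀ t, (C t).Nonempty := by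
    rintro ⟨t, ht⟩
    obtain ⟨e, ⟨w, hwK, rfl⟩, hlt⟩ := lt_sSup_iff.mp ht
    exact ⟨w, hCmem ⟨t, ht⟩ w hwK hlt.le⟩
  have hdir : Directed (· ⊇ ·) C := by
    rintro t₁ t₂
    refine ⟨⟨t₁.1 ⊔ t₂.1, sup_lt_iff.mpr ⟨t₁.2, t₂.2⟩⟩, ?_, ?_⟩ <;>
    · rintro w ⟨hwK, hw⟩
      refine ⟨hwK, fun hmem => hw ⟨hmem.1, lt_of_lt_of_le hmem.2 ?_⟩⟩
      simp
  obtain ⟨x₀, hx₀⟩ := IsCompact.nonempty_iInter_of_directed_nonempty_isCompact_isClosed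
    C hdir hCne hCco hCclosed
  rw [Set.mem_iInter] at hx₀
  have hx₀K : x₀ ∈ K := (hx₀ (Classical.arbitrary _)).1
  refine ⟨x₀, hx₀K, fun w hw => (hle w hw).trans ?_⟩
  by_contra hcon
  rw [not_le] at hcon
  obtain ⟨c, hc1, hc2⟩ := exists_between hcon
  have := hx₀ ⟨c, hc2⟩
  exact absurd hc1 (not_lt.mpr (le_of_not_gt fun h => (this.2 ⟨hKW hx₀K, h⟩)))

lemma smp (m : ℕ) (hm : 1 ≤ m) {W Ω : Set (EuclideanSpace ℝ (Fin (m+1)))}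
    (hW : IsOpen W) (hΩ : IsOpen Ω) (hconn : IsPreconnected Ω) (hΩW : Ω ⊆ W)
    {v : EuclideanSpace ℝ (Fin (m+1)) → EReal}
    (husc : UpperSemicontinuousOn v W)
    (hsm : ∀ x r, 0 < r → closedBall x r ⊆ W → v x ≤ sphereMean (m:ℝ) v x r)
    {M : ℝ} (hle : ∀ w ∈ Ω, v w ≤ (M:EReal)) {a : EuclideanSpace ℝ (Fin (m+1))}
    (ha : a ∈ Ω) (haM : v a = (M:EReal)) : ∀ x ∈ Ω, v x = (M:EReal) := by
  have huscΩ : UpperSemicontinuousOn v Ω := husc.mono hΩW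
  have hsmΩ : ∀ x r, 0 < r → closedBall x r ⊆ Ω → v x ≤ sphereMean (m:ℝ) v x r :=
    fun x r hr hsub => hsm x r hr (hsub.trans hΩW)
  set S := {x ∈ Ω | v x = (M:EReal)} with hS
  set T := {x ∈ Ω | v x < (M:EReal)} with hT
  have hSopen : IsOpen S := by
    rw [isOpen_iff_mem_nhds]
    rintro y ⟨hyΩ, hyM⟩
    obtain ⟨ε, hε0, hεsub⟩ := Metric.isOpen_iff.mp hΩ y hyΩ
    have hballsub : closedBall y (ε/2) ⊆ Ω :=
      (closedBall_subset_ball (by linarith)).trans hεsub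
    have := eq_on_ball m hm hΩ huscΩ hsmΩ hle (by positivity : (0:ℝ) < ε/2) hballsub hyM
    refine Filter.mem_of_superset (Metric.ball_mem_nhds y (by positivity : (0:ℝ) < ε/2)) ?_
    intro z hz
    exact ⟨hballsub (ball_subset_closedBall hz), this z hz⟩
  have hTopen : IsOpen T := isOpen_usc_lt hΩ huscΩ _
  by_contra hcon
  push_neg at hcon
  obtain ⟨x, hxΩ, hxne⟩ := hcon
  have hcover : Ω ⊆ S ∪ T := by
    intro w hw
    rcases lt_or_eq_of_le (hle w hw) with h | h
    · exact Or.inr ⟨hw, h⟩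
    · exact Or.inl ⟨hw, h⟩
  have h1 : (Ω ∩ (S ∩ T)).Nonempty :=
    hconn S T hSopen hTopen hcover ⟨a, ha, ha, haM⟩
      ⟨x, hxΩ, hxΩ, lt_of_le_of_ne (hle x hxΩ) hxne⟩
  obtain ⟨w, _, ⟨_, hw1⟩, ⟨_, hw2⟩⟩ := h1
  rw [hw1] at hw2
  exact lt_irrefl _ hw2

lemma wmp (m : ℕ) (hm : 1 ≤ m) {W Ω : Set (EuclideanSpace ℝ (Fin (m+1)))}
    (hW : IsOpen W) (hΩ : IsOpen Ω) (hconn : IsConnected Ω)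
    (hbdd : Bornology.IsBounded Ω) (hclos : closure Ω ⊆ W)
    {v : EuclideanSpace ℝ (Fin (m+1)) → EReal}
    (husc : UpperSemicontinuousOn v W) (htop : ∀ w ∈ W, v w < ⊤)
    (hsm : ∀ x r, 0 < r → closedBall x r ⊆ W → v x ≤ sphereMean (m:ℝ) v x r) :
    ∀ x ∈ closure Ω, ∃ ζ ∈ frontier Ω, v x ≤ v ζ := by
  intro x hx
  have hΩW : Ω ⊆ W := subset_closure.trans hclos
  have hfr : (frontier Ω).Nonempty := by
    by_contra hcon
    rw [Set.not_nonempty_iff_eq_empty] at hcon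
    have hclopen : IsClopen Ω := isClopen_iff_frontier_eq_empty.mpr hcon
    rcases isClopen_iff.mp hclopen with h | h
    · exact absurd h (Set.nonempty_iff_ne_empty.mp hconn.nonempty)
    · rw [h] at hbdd
      exact NormedSpace.unbounded_univ ℝ _ hbdd
  have hKco : IsCompact (closure Ω) := hbdd.isCompact_closure
  obtain ⟨x₀, hx₀K, hx₀max⟩ := usc_exists_max hKco (hconn.nonempty.mono subset_closure)
    hW hclos husc
  by_cases hx₀fr : x₀ ∈ frontier Ω
  · exact ⟨x₀, hx₀fr, hx₀max x hx⟩
  have hx₀Ω : x₀ ∈ Ω := by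
    have h2 : x₀ ∈ interior Ω := by
      by_contra h
      exact hx₀fr ⟨hx₀K, h⟩
    rwa [hΩ.interior_eq] at h2
  by_cases hvbot : v x₀ = ⊥
  · obtain ⟨ζ, hζ⟩ := hfr
    refine ⟨ζ, hζ, ?_⟩
    have h3 := hx₀max x hx
    rw [hvbot] at h3
    exact (le_bot_iff.mp h3) ▸ bot_le
  set M := (v x₀).toReal with hMdef
  have hvx₀ : v x₀ = (M:EReal) := (EReal.coe_toReal (htop x₀ (hclos hx₀K)).ne hvbot).symm
  have hleΩ : ∀ w ∈ Ω, v w ≤ (M:EReal) := fun w hw =>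
    (hx₀max w (subset_closure hw)).trans_eq hvx₀
  have hconst := smp m hm hW hΩ hconn.isPreconnected hΩW husc hsm hleΩ hx₀Ω hvx₀
  obtain ⟨ζ, hζ⟩ := hfr
  refine ⟨ζ, hζ, (hx₀max x hx).trans ?_⟩
  rw [hvx₀]
  by_contra hcon
  rw [not_le] at hcon
  have hζcl : ζ ∈ closure Ω := frontier_subset_closure hζ
  have hev : ∀ᶠ w in nhdsWithin ζ W, v w < (M:EReal) := husc ζ (hclos hζcl) (M:EReal) hcon
  have hev2 : ∀ᶠ w in nhdsWithin ζ Ω, v w < (M:EReal) :=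
    hev.filter_mono (nhdsWithin_mono ζ hΩW)
  haveI hnb : (nhdsWithin ζ Ω).NeBot := mem_closure_iff_nhdsWithin_neBot.mp hζcl
  obtain ⟨w, hw1, hw2⟩ := (hev2.and (eventually_mem_nhdsWithin (s := Ω) (a := ζ))).exists
  rw [hconst w hw2] at hw1
  exact lt_irrefl _ hw1

end Aux3

/-- strong maximum principle—if a separately subharmonic function
bounded by `M` on the distinguished boundary attains the value `M` at an
interior point, it is identically `M`. -/
theorem separately_subharmonic_eq_of_eq_at_interior_point
    (p q : ℕ) (hp : 2 ≤ p) (hq : 2 ≤ q)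
    (Ω₁ : Set (EuclideanSpace ℝ (Fin p))) (Ω₂ : Set (EuclideanSpace ℝ (Fin q)))
    (hΩ₁open : IsOpen Ω₁) (hΩ₂open : IsOpen Ω₂)
    (hΩ₁conn : IsConnected Ω₁) (hΩ₂conn : IsConnected Ω₂)
    (hΩ₁bdd : Bornology.IsBounded Ω₁) (hΩ₂bdd : Bornology.IsBounded Ω₂)
    (U : Set (ProdSpace p q)) (hUopen : IsOpen U)
    (hUnbhd : closure (prodSet Ω₁ Ω₂) ⊆ U)
    (u : ProdSpace p q → EReal) (hu : SeparatelySubharmonicOn u U)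
    (M : ℝ) (hM : ∀ ζ ∈ frontier Ω₁, ∀ η ∈ frontier Ω₂, u (prodMk ζ η) ≤ (M : EReal))
    (a : EuclideanSpace ℝ (Fin p)) (b : EuclideanSpace ℝ (Fin q))
    (ha : a ∈ Ω₁) (hb : b ∈ Ω₂) (hab : u (prodMk a b) = (M : EReal)) :
    ∀ x ∈ Ω₁, ∀ y ∈ Ω₂, u (prodMk x y) = (M : EReal) := by
  obtain ⟨m, rfl⟩ : ∃ m, p = m + 1 := ⟨p - 1, by omega⟩
  obtain ⟨l, rfl⟩ : ∃ l, q = l + 1 := ⟨q - 1, by omega⟩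
  have hm : 1 ≤ m := by omega
  have hl : 1 ≤ l := by omega
  have hcast₁ : ((m+1 : ℕ) : ℝ) - 1 = (m:ℝ) := by push_cast; ring
  have hcast₂ : ((l+1 : ℕ) : ℝ) - 1 = (l:ℝ) := by push_cast; ring
  have hcl : ∀ ζ ∈ closure Ω₁, ∀ η ∈ closure Ω₂, prodMk ζ η ∈ U := by
    intro ζ hζ η hη
    apply hUnbhd
    have h1 : (ζ, η) ∈ closure (Ω₁ ×ˢ Ω₂) := by
      rw [closure_prod_eq]; exact ⟨hζ, hη⟩
    have h2 := image_closure_subset_closure_image (s := Ω₁ ×ˢ Ω₂)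
      (WithLp.prod_continuous_toLp 2 (EuclideanSpace ℝ (Fin (m+1)))
        (EuclideanSpace ℝ (Fin (l+1))))
    have h3 : prodMk ζ η ∈
        (WithLp.equiv 2 ((EuclideanSpace ℝ (Fin (m+1))) × (EuclideanSpace ℝ (Fin (l+1))))).symm ''
          closure (Ω₁ ×ˢ Ω₂) := ⟨(ζ, η), h1, rfl⟩
    have h4 := h2 h3
    have h5 : (WithLp.equiv 2 ((EuclideanSpace ℝ (Fin (m+1))) ×
        (EuclideanSpace ℝ (Fin (l+1))))).symm '' (Ω₁ ×ˢ Ω₂) = prodSet Ω₁ Ω₂ := by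
      rw [Equiv.image_eq_preimage_symm]
      simp only [Equiv.symm_symm]
      rfl
    rw [← h5]; exact h4
  have hsliceopen₁ : ∀ y, IsOpen {x : EuclideanSpace ℝ (Fin (m+1)) | prodMk x y ∈ U} := by
    intro y
    have hcont : Continuous (fun x : EuclideanSpace ℝ (Fin (m+1)) => prodMk x y) :=
      (WithLp.prod_continuous_toLp 2 _ _).comp (continuous_id.prodMk continuous_const)
    exact hUopen.preimage hcont
  have hsliceopen₂ : ∀ x, IsOpen {y : EuclideanSpace ℝ (Fin (l+1)) | prodMk x y ∈ U} := by
    intro x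
    have hcont : Continuous (fun y : EuclideanSpace ℝ (Fin (l+1)) => prodMk x y) :=
      (WithLp.prod_continuous_toLp 2 _ _).comp (continuous_const.prodMk continuous_id)
    exact hUopen.preimage hcont
  -- Step 0 : boundary slice bound
  have step0 : ∀ ζ ∈ frontier Ω₁, ∀ y ∈ closure Ω₂, u (prodMk ζ y) ≤ (M:EReal) := by
    intro ζ hζ y hy
    have hζcl : ζ ∈ closure Ω₁ := frontier_subset_closure hζ
    obtain ⟨husc, htop, -, hsm⟩ := (hu ζ y (hcl ζ hζcl y hy)).2
    rw [hcast₂] at hsm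
    have hclos₂ : closure Ω₂ ⊆ {y' | prodMk ζ y' ∈ U} := fun η hη => hcl ζ hζcl η hη
    obtain ⟨η, hηfr, hle⟩ := wmp l hl (hsliceopen₂ ζ) hΩ₂open hΩ₂conn hΩ₂bdd hclos₂
      husc htop hsm y hy
    exact hle.trans (hM ζ hζ η hηfr)
  -- Step 1 : global bound by M
  have step1 : ∀ x ∈ closure Ω₁, ∀ y ∈ closure Ω₂, u (prodMk x y) ≤ (M:EReal) := by
    intro x hx y hy
    obtain ⟨husc, htop, -, hsm⟩ := (hu x y (hcl x hx y hy)).1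
    rw [hcast₁] at hsm
    have hclos₁ : closure Ω₁ ⊆ {x' | prodMk x' y ∈ U} := fun ξ hξ => hcl ξ hξ y hy
    obtain ⟨ζ, hζfr, hle⟩ := wmp m hm (hsliceopen₁ y) hΩ₁open hΩ₁conn hΩ₁bdd hclos₁
      husc htop hsm x hx
    exact hle.trans (step0 ζ hζfr y hy)
  -- Step 2 : strong maximum principle in the first variable at y = b
  have step2 : ∀ x ∈ Ω₁, u (prodMk x b) = (M:EReal) := by
    obtain ⟨husc, htop, -, hsm⟩ :=
      (hu a b (hcl a (subset_closure ha) b (subset_closure hb))).1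
    rw [hcast₁] at hsm
    exact smp m hm (hsliceopen₁ b) hΩ₁open hΩ₁conn.isPreconnected
      (fun x hx => hcl x (subset_closure hx) b (subset_closure hb)) husc hsm
      (fun w hw => step1 w (subset_closure hw) b (subset_closure hb)) ha hab
  -- Step 3 : strong maximum principle in the second variable
  intro x hx y hy
  obtain ⟨husc, htop, -, hsm⟩ :=
    (hu x b (hcl x (subset_closure hx) b (subset_closure hb))).2
  rw [hcast₂] at hsm
  exact smp l hl (hsliceopen₂ x) hΩ₂open hΩ₂conn.isPreconnected
    (fun y' hy' => hcl x (subset_closure hx) y' (subset_closure hy')) husc hsm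
    (fun w hw => step1 x (subset_closure hx) w (subset_closure hw)) hb (step2 x hx) y hy
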